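/- arXiv:math-ph/0106024 — 2 statements merged into one kernel-verified Lean document; each statement's English description precedes it below -/
import Mathlib

section
/- Let Δ > 1 and L ≥ 2 an integer, A(Δ) = (1/2)√(1−Δ⁻²). The smallest eigenvalue of the droplet Hamiltonian H^{++}_{[1,L]} = H^XXZ_{[1,L]} − A(Δ)(S³_1 + S³_L) on (ℂ²)^{⊗L} equals −A(Δ), its eigenspace is exactly span{|↑⋯↑⟩}, and for every nonzero ψ orthogonal to |↑⋯↑⟩ one has ⟨ψ, H^{++}_{[1,L]} ψ⟩/‖ψ‖² ≥ −A(Δ) + (1/2)(1 − Δ⁻¹). -/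
open scoped Classical

noncomputable section

/-- Spin configurations of the chain of length `L`; `true` means down spin. -/
abbrev SpinConf (L : ℕ) := Fin L → Bool

/-- The Hilbert space `(ℂ²)^{⊗L}` in the configuration basis. -/
abbrev ChainSpace (L : ℕ) := EuclideanSpace ℂ (SpinConf L)

/-- The set of down-spin sites of a configuration. -/
def downs {L : ℕ} (σ : SpinConf L) : Finset (Fin L) := Finset.univ.filter fun i => σ i = true

/-- Exchange the spins at sites `i` and `j`. -/
def swapPair {L : ℕ} (i j : Fin L) (σ : SpinConf L) : SpinConf L :=
  fun k => if k = i then σ j else if k = j then σ i else σ k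

/-- The matrix of the nearest-neighbour interaction
`H^XXZ_{i,j} = −Δ⁻¹(S⃗_i·S⃗_j − 1/4) − (1−Δ⁻¹)(S³_iS³_j − 1/4)` in the configuration basis:
it annihilates configurations with equal spins at `i,j`, and on a configuration with
opposite spins it acts by `(1/2)·id − (1/(2Δ))·(spin exchange)`. -/
def bondMat (Δ : ℝ) {L : ℕ} (i j : Fin L) : Matrix (SpinConf L) (SpinConf L) ℂ :=
  fun σ τ =>
    if σ i = σ j then 0
    else (if τ = σ then (1/2 : ℂ) else 0) -
      ((1/(2*Δ) : ℝ) : ℂ) * (if τ = swapPair i j σ then 1 else 0)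

/-- `H^XXZ_{[1,L]} = Σ_{x=1}^{L−1} H^XXZ_{x,x+1}` (sites are `1,…,L`, i.e. `i+1` for `i : Fin L`). -/
def xxzMat (Δ : ℝ) (L : ℕ) : Matrix (SpinConf L) (SpinConf L) ℂ :=
  ∑ x : Fin L, if h : (x : ℕ) + 1 < L then bondMat Δ x ⟨(x : ℕ) + 1, h⟩ else 0

/-- Third spin component at site `i`: diagonal with value `±1/2`. -/
def s3Mat {L : ℕ} (i : Fin L) : Matrix (SpinConf L) (SpinConf L) ℂ :=
  fun σ τ => if τ = σ then (if σ i then (-(1/2) : ℂ) else (1/2 : ℂ)) else 0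

/-- `A(Δ) = (1/2)√(1 − Δ⁻²)`. -/
def aDelta (Δ : ℝ) : ℝ := Real.sqrt (1 - Δ⁻¹ ^ 2) / 2

/-- The droplet Hamiltonian `H^{++}_{[1,L]} = H^XXZ_{[1,L]} − A(Δ)(S³_1 + S³_L)`. -/
def hppMat (Δ : ℝ) (L : ℕ) (hL : 0 < L) : Matrix (SpinConf L) (SpinConf L) ℂ :=
  xxzMat Δ L - ((aDelta Δ : ℝ) : ℂ) •
    (s3Mat (⟨0, hL⟩ : Fin L) + s3Mat (⟨L - 1, by omega⟩ : Fin L))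

/-- The all-up product vector `|↑⋯↑⟩`. -/
def allUpVec (L : ℕ) : ChainSpace L := EuclideanSpace.single (fun _ => false) 1

/-- The all-down product vector `|↓⋯↓⟩`. -/
def allDownVec (L : ℕ) : ChainSpace L := EuclideanSpace.single (fun _ => true) 1

/-- continuous linear map associated to a matrix. -/
def matCLM {L : ℕ} (M : Matrix (SpinConf L) (SpinConf L) ℂ) :
    ChainSpace L →L[ℂ] ChainSpace L :=
  LinearMap.toContinuousLinearMap (Matrix.toEuclideanLin M)

/-- The orthogonal projection onto a subspace, as an operator on the whole space. -/
def projCLM {L : ℕ} (K : Submodule ℂ (ChainSpace L)) : ChainSpace L →L[ℂ] ChainSpace L :=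
  K.subtypeL.comp K.orthogonalProjection

/-- The kink ⊗ antikink droplet state `ξ_{L,n}(x) = ψ^{+−}_{[1,x]}(⌊n/2⌋) ⊗ ψ^{−+}_{[x+1,L]}(⌈n/2⌉)`
written in the configuration basis (site `i : Fin L` has position `i+1`). -/
def dropletVec (q : ℝ) (L n x : ℕ) : ChainSpace L :=
  WithLp.toLp 2 fun σ =>
    if ((downs σ).filter fun i => (i : ℕ) + 1 ≤ x).card = n / 2 ∧
       ((downs σ).filter fun i => x < (i : ℕ) + 1).card = n - n / 2 then
      (q : ℂ) ^ ((∑ i ∈ (downs σ).filter fun i => (i : ℕ) + 1 ≤ x, ((x : ℤ) - (i : ℕ))) +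
        ∑ i ∈ (downs σ).filter fun i => x < (i : ℕ) + 1, (((i : ℕ) : ℤ) + 1 - (x : ℤ)))
    else 0

/-- The droplet subspace `K_{L,n} = span{ξ_{L,n}(x) : ⌊n/2⌋ ≤ x ≤ L − ⌈n/2⌉}`. -/
def dropletSpace (q : ℝ) (L n : ℕ) : Submodule ℂ (ChainSpace L) :=
  Submodule.span ℂ {v | ∃ x : ℕ, n / 2 ≤ x ∧ x ≤ L - (n - n / 2) ∧ v = dropletVec q L n x}

/-- `P_J` for the interval `J` of positions `[a, a+l−1]`: projection onto configurations that
are fully polarized (all up or all down) on `J`. -/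
def pJ (L a l : ℕ) (ψ : ChainSpace L) : ChainSpace L :=
  WithLp.toLp 2 fun σ =>
    if (∀ i : Fin L, a ≤ (i : ℕ) + 1 → (i : ℕ) + 1 ≤ a + l - 1 → σ i = false) ∨
       (∀ i : Fin L, a ≤ (i : ℕ) + 1 → (i : ℕ) + 1 ≤ a + l - 1 → σ i = true) then ψ σ else 0

end

noncomputable section StmtElevenAux

open Finset in
section
variable {L : ℕ}

lemma swap_swap (i j : Fin L) (σ : SpinConf L) : swapPair i j (swapPair i j σ) = σ := by
  funext k; unfold swapPair; split_ifs with h1 h2 <;> simp_all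

lemma swap_apply_i (i j : Fin L) (σ : SpinConf L) : swapPair i j σ i = σ j := by
  simp [swapPair]

lemma swap_apply_j (i j : Fin L) (σ : SpinConf L) : swapPair i j σ j = σ i := by
  unfold swapPair; split_ifs with h <;> simp_all

lemma conj_mul_self_re (a : ℂ) : ((starRingEnd ℂ) a * a).re = ‖a‖^2 := by
  rw [mul_comm, Complex.mul_conj, Complex.ofReal_re, Complex.normSq_eq_norm_sq]

lemma re_conj_mul_le (a b : ℂ) : ((starRingEnd ℂ) a * b).re ≤ (‖a‖^2 + ‖b‖^2)/2 := by
  have h1 : ((starRingEnd ℂ) a * b).re ≤ ‖(starRingEnd ℂ) a * b‖ := Complex.re_le_norm _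
  have h2 : ‖(starRingEnd ℂ) a * b‖ = ‖a‖ * ‖b‖ := by simp
  nlinarith [sq_nonneg (‖a‖ - ‖b‖), norm_nonneg a, norm_nonneg b]

/-- Quadratic form of a matrix. -/
def quadC (M : Matrix (SpinConf L) (SpinConf L) ℂ) (ψ : ChainSpace L) : ℂ :=
  inner ℂ ψ (Matrix.toEuclideanLin M ψ)

lemma quadC_eq (M : Matrix (SpinConf L) (SpinConf L) ℂ) (ψ : ChainSpace L) :
    quadC M ψ = ∑ σ, (starRingEnd ℂ) (ψ σ) * ∑ τ, M σ τ * ψ τ := by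
  simp only [quadC, PiLp.inner_apply, RCLike.inner_apply']
  rfl

lemma quadC_sub (M N : Matrix (SpinConf L) (SpinConf L) ℂ) (ψ : ChainSpace L) :
    quadC (M - N) ψ = quadC M ψ - quadC N ψ := by
  simp only [quadC_eq, Matrix.sub_apply, sub_mul, Finset.sum_sub_distrib, mul_sub]

lemma quadC_add (M N : Matrix (SpinConf L) (SpinConf L) ℂ) (ψ : ChainSpace L) :
    quadC (M + N) ψ = quadC M ψ + quadC N ψ := by
  simp only [quadC_eq, Matrix.add_apply, add_mul, Finset.sum_add_distrib, mul_add]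

lemma quadC_smul (c : ℂ) (M : Matrix (SpinConf L) (SpinConf L) ℂ) (ψ : ChainSpace L) :
    quadC (c • M) ψ = c * quadC M ψ := by
  simp only [quadC_eq, Matrix.smul_apply, smul_eq_mul]
  have hrow : ∀ σ : SpinConf L, ∑ τ, (c * M σ τ) * ψ τ = c * ∑ τ, M σ τ * ψ τ := by
    intro σ
    rw [Finset.mul_sum]
    exact Finset.sum_congr rfl fun τ _ => by ring
  simp only [hrow]
  rw [Finset.mul_sum]
  exact Finset.sum_congr rfl fun σ _ => by ring

lemma quadC_sum {α : Type*} (s : Finset α) (M : α → Matrix (SpinConf L) (SpinConf L) ℂ)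
    (ψ : ChainSpace L) : quadC (∑ x ∈ s, M x) ψ = ∑ x ∈ s, quadC (M x) ψ := by
  simp only [quadC_eq, Matrix.sum_apply, Finset.sum_mul, Finset.mul_sum]
  have h1 : ∀ σ : SpinConf L, ∑ τ : SpinConf L, ∑ x ∈ s, (starRingEnd ℂ) (ψ σ) * (M x σ τ * ψ τ)
      = ∑ x ∈ s, ∑ τ : SpinConf L, (starRingEnd ℂ) (ψ σ) * (M x σ τ * ψ τ) := fun σ => Finset.sum_comm
  simp only [h1]
  exact Finset.sum_comm

lemma bond_row (Δ : ℝ) (i j : Fin L) (σ : SpinConf L) (ψ : ChainSpace L) :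
    ∑ τ, bondMat Δ i j σ τ * ψ τ =
      if σ i = σ j then 0
      else (1/2 : ℂ) * ψ σ - ((1/(2*Δ) : ℝ) : ℂ) * ψ (swapPair i j σ) := by
  unfold bondMat
  split_ifs with h
  · simp
  · simp [sub_mul, Finset.sum_sub_distrib, ite_mul, mul_assoc]

lemma quad_bond (Δ : ℝ) (hΔ : 1 < Δ) (i j : Fin L) (ψ : ChainSpace L) :
    (1/2)*(1-Δ⁻¹) * ∑ σ ∈ Finset.univ.filter (fun σ : SpinConf L => ¬ σ i = σ j), ‖ψ σ‖^2
      ≤ (quadC (bondMat Δ i j) ψ).re := by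
  have hΔ0 : (0:ℝ) < Δ := by linarith
  rw [quadC_eq]
  simp only [bond_row, mul_ite, mul_zero]
  rw [show (∑ x : SpinConf L,
        if x i = x j then 0 else (starRingEnd ℂ) (ψ x) * ((1/2:ℂ) * ψ x - ((1/(2*Δ):ℝ):ℂ) * ψ (swapPair i j x)))
      = ∑ x ∈ Finset.univ.filter (fun σ : SpinConf L => ¬ σ i = σ j),
        (starRingEnd ℂ) (ψ x) * ((1/2:ℂ) * ψ x - ((1/(2*Δ):ℝ):ℂ) * ψ (swapPair i j x)) by
    rw [Finset.sum_filter]; exact Finset.sum_congr rfl fun x _ => by by_cases h : x i = x j <;> simp [h]]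
  have hswap : ∀ σ ∈ Finset.univ.filter (fun σ : SpinConf L => ¬ σ i = σ j),
      swapPair i j σ ∈ Finset.univ.filter (fun σ : SpinConf L => ¬ σ i = σ j) := by
    intro σ hσ
    simp only [Finset.mem_filter, Finset.mem_univ, true_and] at hσ ⊢
    rw [swap_apply_i, swap_apply_j]; exact fun h => hσ h.symm
  have hsum : ∑ σ ∈ Finset.univ.filter (fun σ : SpinConf L => ¬ σ i = σ j), ‖ψ (swapPair i j σ)‖^2
      = ∑ σ ∈ Finset.univ.filter (fun σ : SpinConf L => ¬ σ i = σ j), ‖ψ σ‖^2 := by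
    apply Finset.sum_nbij' (fun σ => swapPair i j σ) (fun σ => swapPair i j σ) hswap hswap
      (fun σ _ => swap_swap i j σ) (fun σ _ => swap_swap i j σ)
    intro σ _; rfl
  rw [Complex.re_sum]
  calc (1/2)*(1-Δ⁻¹) * ∑ σ ∈ Finset.univ.filter (fun σ : SpinConf L => ¬ σ i = σ j), ‖ψ σ‖^2
      = ∑ σ ∈ Finset.univ.filter (fun σ : SpinConf L => ¬ σ i = σ j),
          ((1/2) * ‖ψ σ‖^2 - (1/(2*Δ)) * ((‖ψ σ‖^2 + ‖ψ (swapPair i j σ)‖^2)/2)) := by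
        rw [Finset.sum_sub_distrib, ← Finset.mul_sum, ← Finset.mul_sum]
        rw [show ∑ σ ∈ Finset.univ.filter (fun σ : SpinConf L => ¬ σ i = σ j),
          ((‖ψ σ‖^2 + ‖ψ (swapPair i j σ)‖^2)/2) = ∑ σ ∈ Finset.univ.filter (fun σ : SpinConf L => ¬ σ i = σ j), ‖ψ σ‖^2 by
            rw [← Finset.sum_div, Finset.sum_add_distrib, hsum]; ring]
        field_simp
    _ ≤ _ := by
        apply Finset.sum_le_sum
        intro σ hσ
        have : ((starRingEnd ℂ) (ψ σ) * ((1/2 : ℂ) * ψ σ - ((1/(2*Δ) : ℝ) : ℂ) * ψ (swapPair i j σ))).re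
            = (1/2) * ‖ψ σ‖^2 - (1/(2*Δ)) * ((starRingEnd ℂ) (ψ σ) * ψ (swapPair i j σ)).re := by
          rw [mul_sub]
          rw [Complex.sub_re]
          congr 1
          · rw [show (starRingEnd ℂ) (ψ σ) * ((1/2 : ℂ) * ψ σ) = (((1/2:ℝ)):ℂ) * ((starRingEnd ℂ) (ψ σ) * ψ σ) by push_cast; ring]
            rw [Complex.re_ofReal_mul, conj_mul_self_re]
          · rw [show (starRingEnd ℂ) (ψ σ) * (((1/(2*Δ) : ℝ) : ℂ) * ψ (swapPair i j σ)) = ((1/(2*Δ) : ℝ) : ℂ) * ((starRingEnd ℂ) (ψ σ) * ψ (swapPair i j σ)) by ring]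
            rw [Complex.re_ofReal_mul]
        rw [this]
        have h2 := re_conj_mul_le (ψ σ) (ψ (swapPair i j σ))
        have h3 : (0:ℝ) < 1/(2*Δ) := by positivity
        nlinarith

lemma quad_s3_re (i : Fin L) (ψ : ChainSpace L) :
    (quadC (s3Mat i) ψ).re = ∑ σ, (if σ i then -(1/2:ℝ) else 1/2) * ‖ψ σ‖^2 := by
  rw [quadC_eq]
  rw [Complex.re_sum]
  apply Finset.sum_congr rfl
  intro σ _
  have hrow : ∑ τ, s3Mat i σ τ * ψ τ = (if σ i then (-(1/2):ℂ) else (1/2:ℂ)) * ψ σ := by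
    unfold s3Mat
    simp [ite_mul, Finset.sum_ite_eq]
  rw [hrow]
  have hcast : (if σ i then (-(1/2):ℂ) else (1/2:ℂ)) = (((if σ i then (-(1/2):ℝ) else 1/2) : ℝ) : ℂ) := by
    split_ifs <;> norm_num
  rw [hcast]
  rw [show (starRingEnd ℂ) (ψ σ) * ((((if σ i then (-(1/2):ℝ) else 1/2) : ℝ) : ℂ) * ψ σ)
      = (((if σ i then (-(1/2):ℝ) else 1/2) : ℝ) : ℂ) * ((starRingEnd ℂ) (ψ σ) * ψ σ) by ring]
  rw [Complex.re_ofReal_mul, conj_mul_self_re]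

lemma norm_sq_sum (ψ : ChainSpace L) : ‖ψ‖^2 = ∑ σ, ‖ψ σ‖^2 := by
  rw [EuclideanSpace.norm_eq]
  rw [Real.sq_sqrt (by positivity)]

/-- number of domain walls of a configuration. -/
def wallR (L : ℕ) (σ : SpinConf L) : ℝ :=
  ∑ x : Fin L, if h : (x:ℕ)+1 < L then (if σ x = σ ⟨(x:ℕ)+1, h⟩ then 0 else 1) else 0

lemma wallR_nonneg (L : ℕ) (σ : SpinConf L) : 0 ≤ wallR L σ := by
  apply Finset.sum_nonneg
  intro x _
  split_ifs <;> norm_num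

lemma gamma_le_aDelta (Δ : ℝ) (hΔ : 1 < Δ) : (1/2)*(1-Δ⁻¹) ≤ aDelta Δ := by
  have hq0 : 0 < Δ⁻¹ := by positivity
  have hq1 : Δ⁻¹ < 1 := by
    rw [inv_lt_one_iff₀]; right; exact hΔ
  unfold aDelta
  have h := Real.sqrt_le_sqrt (show (1-Δ⁻¹)^2 ≤ 1 - Δ⁻¹^2 by nlinarith)
  rw [Real.sqrt_sq (by linarith)] at h
  linarith

lemma gamma_nonneg (Δ : ℝ) (hΔ : 1 < Δ) : 0 ≤ (1/2)*(1-Δ⁻¹) := by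
  have hq1 : Δ⁻¹ < 1 := by rw [inv_lt_one_iff₀]; right; exact hΔ
  linarith

/-- key combinatorial fact: any non-all-up configuration has a wall or a down end. -/
lemma one_le_weight (L : ℕ) (hL : 2 ≤ L) (σ : SpinConf L) (hσ : σ ≠ fun _ => false) :
    (1:ℝ) ≤ wallR L σ + ((if σ ⟨0, Nat.zero_lt_of_lt hL⟩ then (1:ℝ) else 0) + (if σ ⟨L-1, by omega⟩ then (1:ℝ) else 0)) := by
  have hw := wallR_nonneg L σ
  by_cases h0 : σ ⟨0, Nat.zero_lt_of_lt hL⟩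
  · have : (0:ℝ) ≤ if σ ⟨L-1, by omega⟩ then (1:ℝ) else 0 := by split_ifs <;> norm_num
    simp only [h0, if_true]; linarith
  · -- there is a down spin; find the first one
    have hex : ∃ n, ∃ h : n < L, σ ⟨n, h⟩ = true := by
      by_contra hc
      push_neg at hc
      apply hσ
      funext k
      have := hc k k.2
      simpa using this
    classical
    let m := Nat.find hex
    obtain ⟨hmL, hmtrue⟩ : ∃ h : m < L, σ ⟨m, h⟩ = true := Nat.find_spec hex
    have hm0 : m ≠ 0 := by
      intro hme
      apply h0
      have : σ ⟨m, hmL⟩ = true := hmtrue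
      simpa [hme] using this
    have hprev : σ ⟨m-1, by omega⟩ = false := by
      have := Nat.find_min hex (show m - 1 < m by omega)
      push_neg at this
      have h2 := this (show m - 1 < L by omega)
      simpa using h2
    -- wall at x = m-1
    have hterm : (1:ℝ) ≤ wallR L σ := by
      set f : Fin L → ℝ := fun x => if h : (x:ℕ)+1 < L then (if σ x = σ ⟨(x:ℕ)+1, h⟩ then (0:ℝ) else 1) else 0 with hf
      have hnn : ∀ x ∈ Finset.univ, (0:ℝ) ≤ f x := by
        intro x _
        simp only [hf]
        split_ifs <;> norm_num
      have hsle := Finset.single_le_sum hnn (Finset.mem_univ (⟨m-1, by omega⟩ : Fin L))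
      have hlt : (m-1) + 1 < L := by omega
      have hfv : f ⟨m-1, by omega⟩ = 1 := by
        simp only [hf]
        rw [dif_pos hlt]
        have hmk : (⟨(m-1)+1, hlt⟩ : Fin L) = ⟨m, hmL⟩ := by
          apply Fin.ext
          simp only []
          omega
        rw [hmk, hprev, hmtrue]
        norm_num
      rw [hfv] at hsle
      exact hsle
    have h1 : (0:ℝ) ≤ if σ ⟨0, Nat.zero_lt_of_lt hL⟩ then (1:ℝ) else 0 := by split_ifs <;> norm_num
    have h2 : (0:ℝ) ≤ if σ ⟨L-1, by omega⟩ then (1:ℝ) else 0 := by split_ifs <;> norm_num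
    linarith

/-- The central estimate: `⟨ψ, H^{++} ψ⟩ + A‖ψ‖² ≥ γ Σ_{σ ≠ all-up} |ψ(σ)|²`. -/
lemma main_ineq (Δ : ℝ) (hΔ : 1 < Δ) (L : ℕ) (hL : 2 ≤ L) (hL0 : 0 < L) (ψ : ChainSpace L) :
    (1/2)*(1-Δ⁻¹) * ∑ σ ∈ Finset.univ.filter (fun σ : SpinConf L => σ ≠ fun _ => false), ‖ψ σ‖^2
      ≤ (quadC (hppMat Δ L hL0) ψ).re + aDelta Δ * ‖ψ‖^2 := by
  set γ := (1/2)*(1-Δ⁻¹) with hγ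
  set A := aDelta Δ with hA
  have hγ0 : 0 ≤ γ := gamma_nonneg Δ hΔ
  have hγA : γ ≤ A := gamma_le_aDelta Δ hΔ
  have hA0 : 0 ≤ A := le_trans hγ0 hγA
  -- expand the quadratic form
  have hexp : (quadC (hppMat Δ L hL0) ψ).re
      = (∑ x : Fin L, if h : (x:ℕ)+1 < L then (quadC (bondMat Δ x ⟨(x:ℕ)+1, h⟩) ψ).re else 0)
        - A * ((quadC (s3Mat (⟨0, hL0⟩ : Fin L)) ψ).re + (quadC (s3Mat (⟨L-1, by omega⟩ : Fin L)) ψ).re) := by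
    unfold hppMat xxzMat
    rw [quadC_sub, quadC_sum, quadC_smul, quadC_add]
    rw [Complex.sub_re, Complex.re_sum]
    congr 1
    · apply Finset.sum_congr rfl
      intro x _
      by_cases h : (x:ℕ)+1 < L
      · rw [dif_pos h, dif_pos h]
      · rw [dif_neg h, dif_neg h]
        have : quadC (0 : Matrix (SpinConf L) (SpinConf L) ℂ) ψ = 0 := by
          rw [quadC_eq]; simp
        rw [this]; rfl
    · rw [show ((A:ℂ) * (quadC (s3Mat (⟨0, hL0⟩ : Fin L)) ψ + quadC (s3Mat (⟨L-1, by omega⟩ : Fin L)) ψ)).re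
          = A * (quadC (s3Mat (⟨0, hL0⟩ : Fin L)) ψ + quadC (s3Mat (⟨L-1, by omega⟩ : Fin L)) ψ).re from
        Complex.re_ofReal_mul _ _]
      rw [Complex.add_re]
  rw [hexp]
  -- the diagonal boundary part
  have hdiag : A * ‖ψ‖^2
      - A * ((quadC (s3Mat (⟨0, hL0⟩ : Fin L)) ψ).re + (quadC (s3Mat (⟨L-1, by omega⟩ : Fin L)) ψ).re)
      = ∑ σ : SpinConf L, A * ((if σ ⟨0, hL0⟩ then (1:ℝ) else 0) + (if σ ⟨L-1, by omega⟩ then (1:ℝ) else 0)) * ‖ψ σ‖^2 := by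
    rw [quad_s3_re, quad_s3_re, norm_sq_sum]
    rw [← Finset.sum_add_distrib, Finset.mul_sum, Finset.mul_sum, ← Finset.sum_sub_distrib]
    apply Finset.sum_congr rfl
    intro σ _
    cases hb1 : σ ⟨0, hL0⟩ <;> cases hb2 : σ ⟨L-1, by omega⟩ <;> simp [hb1, hb2] <;> ring
  -- per-bond estimate
  have hbond : ∑ x : Fin L, (if h : (x:ℕ)+1 < L then
        (γ * ∑ σ ∈ Finset.univ.filter (fun σ : SpinConf L => ¬ σ x = σ ⟨(x:ℕ)+1, h⟩), ‖ψ σ‖^2) else 0)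
      ≤ ∑ x : Fin L, if h : (x:ℕ)+1 < L then (quadC (bondMat Δ x ⟨(x:ℕ)+1, h⟩) ψ).re else 0 := by
    apply Finset.sum_le_sum
    intro x _
    by_cases h : (x:ℕ)+1 < L
    · rw [dif_pos h, dif_pos h]; exact quad_bond Δ hΔ x ⟨(x:ℕ)+1, h⟩ ψ
    · rw [dif_neg h, dif_neg h]
  -- rewrite the bond lower bound as a single sum over σ
  have hwall : ∑ x : Fin L, (if h : (x:ℕ)+1 < L then
        (γ * ∑ σ ∈ Finset.univ.filter (fun σ : SpinConf L => ¬ σ x = σ ⟨(x:ℕ)+1, h⟩), ‖ψ σ‖^2) else 0)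
      = ∑ σ : SpinConf L, γ * wallR L σ * ‖ψ σ‖^2 := by
    have step : ∀ x : Fin L, (if h : (x:ℕ)+1 < L then
        (γ * ∑ σ ∈ Finset.univ.filter (fun σ : SpinConf L => ¬ σ x = σ ⟨(x:ℕ)+1, h⟩), ‖ψ σ‖^2) else 0)
        = ∑ σ : SpinConf L, γ * (if h : (x:ℕ)+1 < L then (if σ x = σ ⟨(x:ℕ)+1, h⟩ then (0:ℝ) else 1) else 0) * ‖ψ σ‖^2 := by
      intro x
      by_cases h : (x:ℕ)+1 < L
      · rw [dif_pos h, Finset.sum_filter, Finset.mul_sum]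
        apply Finset.sum_congr rfl
        intro σ _
        rw [dif_pos h]
        by_cases hw : σ x = σ ⟨(x:ℕ)+1, h⟩ <;> simp [hw] <;> ring
      · rw [dif_neg h]
        symm
        apply Finset.sum_eq_zero
        intro σ _
        rw [dif_neg h]
        ring
    rw [Finset.sum_congr rfl (fun x _ => step x)]
    rw [Finset.sum_comm]
    apply Finset.sum_congr rfl
    intro σ _
    unfold wallR
    rw [Finset.mul_sum, Finset.sum_mul]
  calc γ * ∑ σ ∈ Finset.univ.filter (fun σ : SpinConf L => σ ≠ fun _ => false), ‖ψ σ‖^2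
      ≤ ∑ σ : SpinConf L, (γ * wallR L σ + A * ((if σ ⟨0, hL0⟩ then (1:ℝ) else 0) + (if σ ⟨L-1, by omega⟩ then (1:ℝ) else 0))) * ‖ψ σ‖^2 := by
        rw [Finset.mul_sum, Finset.sum_filter]
        apply Finset.sum_le_sum
        intro σ _
        have he0 : (0:ℝ) ≤ (if σ ⟨0, hL0⟩ then (1:ℝ) else 0) := by split_ifs <;> norm_num
        have he1 : (0:ℝ) ≤ (if σ ⟨L-1, by omega⟩ then (1:ℝ) else 0) := by split_ifs <;> norm_num
        have hnn : (0:ℝ) ≤ ‖ψ σ‖^2 := by positivity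
        have hco : (0:ℝ) ≤ γ * wallR L σ + A * ((if σ ⟨0, hL0⟩ then (1:ℝ) else 0) + (if σ ⟨L-1, by omega⟩ then (1:ℝ) else 0)) := by
          have := wallR_nonneg L σ
          have h1 : (0:ℝ) ≤ γ * wallR L σ := mul_nonneg hγ0 this
          have h2 : (0:ℝ) ≤ A * ((if σ ⟨0, hL0⟩ then (1:ℝ) else 0) + (if σ ⟨L-1, by omega⟩ then (1:ℝ) else 0)) :=
            mul_nonneg hA0 (by linarith)
          linarith
        by_cases hσ : σ = fun _ => false
        · rw [if_neg (by simpa using hσ)]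
          exact mul_nonneg hco hnn
        · rw [if_pos hσ]
          have hkey := one_le_weight L hL σ hσ
          have hterm : γ * 1 ≤ γ * wallR L σ + A * ((if σ ⟨0, hL0⟩ then (1:ℝ) else 0) + (if σ ⟨L-1, by omega⟩ then (1:ℝ) else 0)) := by
            nlinarith [wallR_nonneg L σ]
          have := mul_le_mul_of_nonneg_right hterm hnn
          calc γ * ‖ψ σ‖^2 = (γ * 1) * ‖ψ σ‖^2 := by ring
            _ ≤ _ := this
    _ = (∑ σ : SpinConf L, γ * wallR L σ * ‖ψ σ‖^2)
        + ∑ σ : SpinConf L, A * ((if σ ⟨0, hL0⟩ then (1:ℝ) else 0) + (if σ ⟨L-1, by omega⟩ then (1:ℝ) else 0)) * ‖ψ σ‖^2 := by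
        rw [← Finset.sum_add_distrib]
        apply Finset.sum_congr rfl
        intro σ _
        ring
    _ ≤ (∑ x : Fin L, if h : (x:ℕ)+1 < L then (quadC (bondMat Δ x ⟨(x:ℕ)+1, h⟩) ψ).re else 0)
        + ∑ σ : SpinConf L, A * ((if σ ⟨0, hL0⟩ then (1:ℝ) else 0) + (if σ ⟨L-1, by omega⟩ then (1:ℝ) else 0)) * ‖ψ σ‖^2 := by
        apply add_le_add_left
        rw [← hwall]
        exact hbond
    _ = _ := by rw [← hdiag]; ring

lemma bond_col_allup (Δ : ℝ) (i j : Fin L) (σ : SpinConf L) :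
    bondMat Δ i j σ (fun _ => false) = 0 := by
  by_cases h : σ i = σ j
  · simp [bondMat, h]
  · have h1 : ¬ ((fun _ => false) : SpinConf L) = σ := by
      intro he
      exact h (by rw [← he])
    have h2 : ¬ ((fun _ => false) : SpinConf L) = swapPair i j σ := by
      intro he
      apply h
      have hi : swapPair i j σ i = false := by rw [← he]
      have hj : swapPair i j σ j = false := by rw [← he]
      rw [swap_apply_i] at hi
      rw [swap_apply_j] at hj
      rw [hi, hj]
    simp [bondMat, h, h1, h2]

lemma hpp_col_allup (Δ : ℝ) (L : ℕ) (hL0 : 0 < L) (σ : SpinConf L) :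
    hppMat Δ L hL0 σ (fun _ => false)
      = if σ = (fun _ => false) then ((-(aDelta Δ) : ℝ) : ℂ) else 0 := by
  unfold hppMat xxzMat
  have hxxz : (∑ x : Fin L, if h : (x:ℕ)+1 < L then bondMat Δ x ⟨(x:ℕ)+1, h⟩ else 0) σ (fun _ => false) = 0 := by
    rw [Matrix.sum_apply]
    apply Finset.sum_eq_zero
    intro x _
    by_cases h : (x:ℕ)+1 < L
    · rw [dif_pos h]; exact bond_col_allup Δ x _ σ
    · rw [dif_neg h]; rfl
  rw [Matrix.sub_apply, hxxz, Matrix.smul_apply, Matrix.add_apply]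
  unfold s3Mat
  by_cases h : σ = (fun _ => false)
  · subst h
    norm_num
  · have h' : ¬ ((fun _ => false) : SpinConf L) = σ := fun he => h he.symm
    simp [h, h']

lemma allUpVec_apply (L : ℕ) (τ : SpinConf L) :
    allUpVec L τ = if τ = (fun _ => false) then (1:ℂ) else 0 := by
  simp [allUpVec, EuclideanSpace.single_apply]

lemma hpp_allup_eigen (Δ : ℝ) (L : ℕ) (hL0 : 0 < L) :
    Matrix.toEuclideanLin (hppMat Δ L hL0) (allUpVec L)
      = ((-(aDelta Δ) : ℝ) : ℂ) • allUpVec L := by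
  ext σ
  have hlhs : Matrix.toEuclideanLin (hppMat Δ L hL0) (allUpVec L) σ
      = ∑ τ, hppMat Δ L hL0 σ τ * allUpVec L τ := rfl
  rw [hlhs]
  have : ∀ τ, hppMat Δ L hL0 σ τ * allUpVec L τ
      = if τ = (fun _ => false) then hppMat Δ L hL0 σ (fun _ => false) else 0 := by
    intro τ
    rw [allUpVec_apply]
    by_cases h : τ = (fun _ => false)
    · subst h; simp
    · simp [h]
  simp only [this]
  rw [Finset.sum_ite_eq' Finset.univ (fun _ => false) (fun _ => hppMat Δ L hL0 σ (fun _ => false))]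
  rw [if_pos (Finset.mem_univ _)]
  rw [hpp_col_allup]
  show _ = ((-(aDelta Δ) : ℝ) : ℂ) * allUpVec L σ
  rw [allUpVec_apply]
  by_cases h : σ = (fun _ => false) <;> simp [h]

lemma inner_self_re (ψ : ChainSpace L) : (inner ℂ ψ ψ : ℂ).re = ‖ψ‖^2 := by
  simp only [PiLp.inner_apply, RCLike.inner_apply']
  rw [Complex.re_sum]
  simp only [conj_mul_self_re]
  rw [← norm_sq_sum]

end
end StmtElevenAux

/-- the lowest eigenvalue of the droplet Hamiltonian `H^{++}_{[1,L]}` is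
`−A(Δ)` with eigenspace exactly `span{|↑⋯↑⟩}`, and every nonzero `ψ ⊥ |↑⋯↑⟩` has Rayleigh
quotient at least `−A(Δ) + (1/2)(1 − Δ⁻¹)`. -/
theorem stmt11 (Δ : ℝ) (hΔ : 1 < Δ) (L : ℕ) (hL : 2 ≤ L) :
    Matrix.toEuclideanLin (hppMat Δ L (by omega)) (allUpVec L)
      = ((-(aDelta Δ) : ℝ) : ℂ) • allUpVec L ∧
    (∀ ψ : ChainSpace L,
      -(aDelta Δ) * ‖ψ‖ ^ 2 ≤ (inner ℂ ψ (Matrix.toEuclideanLin (hppMat Δ L (by omega)) ψ) : ℂ).re) ∧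
    LinearMap.ker (Matrix.toEuclideanLin (hppMat Δ L (by omega)) +
        ((aDelta Δ : ℝ) : ℂ) • (LinearMap.id : ChainSpace L →ₗ[ℂ] ChainSpace L))
      = Submodule.span ℂ {allUpVec L} ∧
    ∀ ψ : ChainSpace L, ψ ≠ 0 → (inner ℂ (allUpVec L) ψ : ℂ) = 0 →
      -(aDelta Δ) + (1/2) * (1 - Δ⁻¹)
        ≤ (inner ℂ ψ (Matrix.toEuclideanLin (hppMat Δ L (by omega)) ψ) : ℂ).re / ‖ψ‖ ^ 2 := by
  have hL0 : 0 < L := by omega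
  have hγpos : 0 < (1/2)*(1-Δ⁻¹) := by
    have : Δ⁻¹ < 1 := by rw [inv_lt_one_iff₀]; right; exact hΔ
    linarith
  have hγA := gamma_le_aDelta Δ hΔ
  have hA0 : 0 ≤ aDelta Δ := le_trans hγpos.le hγA
  have hmain := fun ψ : ChainSpace L => main_ineq Δ hΔ L hL hL0 ψ
  have hSnonneg : ∀ ψ : ChainSpace L,
      0 ≤ ∑ σ ∈ Finset.univ.filter (fun σ : SpinConf L => σ ≠ fun _ => false), ‖ψ σ‖^2 :=
    fun ψ => Finset.sum_nonneg (fun σ _ => by positivity)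
  refine ⟨hpp_allup_eigen Δ L hL0, ?_, ?_, ?_⟩
  · -- lower bound for all ψ
    intro ψ
    have h1 := hmain ψ
    have hrfl : (inner ℂ ψ (Matrix.toEuclideanLin (hppMat Δ L (by omega : 0 < L)) ψ) : ℂ).re
        = (quadC (hppMat Δ L hL0) ψ).re := rfl
    rw [hrfl]
    have h2 := mul_nonneg hγpos.le (hSnonneg ψ)
    linarith
  · -- the kernel is exactly the span of the all-up vector
    apply le_antisymm
    · intro ψ hψ
      rw [LinearMap.mem_ker, LinearMap.add_apply, LinearMap.smul_apply, LinearMap.id_apply] at hψ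
      have heq : Matrix.toEuclideanLin (hppMat Δ L hL0) ψ = -(((aDelta Δ : ℝ) : ℂ) • ψ) :=
        eq_neg_of_add_eq_zero_left hψ
      have hre : (quadC (hppMat Δ L hL0) ψ).re = -(aDelta Δ) * ‖ψ‖^2 := by
        show (inner ℂ ψ (Matrix.toEuclideanLin (hppMat Δ L hL0) ψ) : ℂ).re = _
        rw [heq, inner_neg_right, inner_smul_right, Complex.neg_re, Complex.re_ofReal_mul,
          inner_self_re]
        ring
      have h1 := hmain ψ
      rw [hre] at h1
      have hS0 : ∑ σ ∈ Finset.univ.filter (fun σ : SpinConf L => σ ≠ fun _ => false), ‖ψ σ‖^2 = 0 := by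
        have hle : (1/2)*(1-Δ⁻¹) * ∑ σ ∈ Finset.univ.filter (fun σ : SpinConf L => σ ≠ fun _ => false), ‖ψ σ‖^2 ≤ 0 := by
          linarith
        nlinarith [hSnonneg ψ]
      have hzero : ∀ σ : SpinConf L, σ ≠ (fun _ => false) → ψ σ = 0 := by
        intro σ hσ
        have hmem : σ ∈ Finset.univ.filter (fun σ : SpinConf L => σ ≠ fun _ => false) :=
          Finset.mem_filter.mpr ⟨Finset.mem_univ _, hσ⟩
        have := (Finset.sum_eq_zero_iff_of_nonneg (fun τ _ => by positivity)).mp hS0 σ hmem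
        have hn : ‖ψ σ‖ = 0 := by nlinarith [norm_nonneg (ψ σ)]
        exact norm_eq_zero.mp hn
      rw [Submodule.mem_span_singleton]
      refine ⟨ψ (fun _ => false), ?_⟩
      ext τ
      show ψ (fun _ => false) * allUpVec L τ = ψ τ
      rw [allUpVec_apply]
      by_cases h : τ = (fun _ => false)
      · rw [if_pos h, mul_one, h]
      · rw [if_neg h, mul_zero, hzero τ h]
    · rw [Submodule.span_le]
      intro v hv
      simp only [Set.mem_singleton_iff] at hv
      subst hv
      rw [SetLike.mem_coe, LinearMap.mem_ker, LinearMap.add_apply, LinearMap.smul_apply,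
        LinearMap.id_apply]
      rw [show Matrix.toEuclideanLin (hppMat Δ L (by omega : 0 < L)) (allUpVec L)
          = ((-(aDelta Δ) : ℝ) : ℂ) • allUpVec L from hpp_allup_eigen Δ L hL0]
      rw [← add_smul]
      rw [show ((-(aDelta Δ) : ℝ) : ℂ) + ((aDelta Δ : ℝ) : ℂ) = 0 by push_cast; ring, zero_smul]
  · -- the gap estimate on the orthogonal complement
    intro ψ hψ0 hinner
    have hup0 : ψ (fun _ => false) = 0 := by
      have hin : (inner ℂ (allUpVec L) ψ : ℂ) = ψ (fun _ => false) := by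
        simp only [PiLp.inner_apply, RCLike.inner_apply', allUpVec_apply]
        rw [show (∑ σ : SpinConf L, (starRingEnd ℂ) (if σ = (fun _ => false) then (1:ℂ) else 0) * ψ σ)
            = ∑ σ : SpinConf L, (if σ = (fun _ => false) then ψ σ else 0) by
          apply Finset.sum_congr rfl
          intro σ _
          by_cases h : σ = (fun _ => false) <;> simp [h]]
        rw [Finset.sum_ite_eq' Finset.univ (fun _ => false) (fun σ => ψ σ)]
        rw [if_pos (Finset.mem_univ _)]
      rw [hin] at hinner
      exact hinner
    have hSfull : ∑ σ ∈ Finset.univ.filter (fun σ : SpinConf L => σ ≠ fun _ => false), ‖ψ σ‖^2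
        = ‖ψ‖^2 := by
      rw [norm_sq_sum]
      rw [← Finset.sum_filter_add_sum_filter_not Finset.univ
        (fun σ : SpinConf L => σ ≠ fun _ => false) (fun σ => ‖ψ σ‖^2)]
      have hz : ∑ σ ∈ Finset.univ.filter (fun σ : SpinConf L => ¬ σ ≠ fun _ => false), ‖ψ σ‖^2 = 0 := by
        apply Finset.sum_eq_zero
        intro σ hσ
        simp only [Finset.mem_filter, not_not] at hσ
        rw [hσ.2, hup0]
        simp
      rw [hz, add_zero]
    have h1 := hmain ψ
    rw [hSfull] at h1
    have hn : 0 < ‖ψ‖ := norm_pos_iff.mpr hψ0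
    rw [le_div_iff₀ (by positivity)]
    have hrfl : (inner ℂ ψ (Matrix.toEuclideanLin (hppMat Δ L (by omega : 0 < L)) ψ) : ℂ).re
        = (quadC (hppMat Δ L hL0) ψ).re := rfl
    rw [hrfl]
    nlinarith
end

section
/- Let Δ > 1, γ = 1 − Δ⁻¹, L ≥ 2, and let ψ ∈ (ℂ²)^{⊗L} be a nonzero vector with energy E = ⟨ψ, H^XXZ_{[1,L]} ψ⟩/‖ψ‖². Then for every integer 1 ≤ l < L there exists a subinterval J = [a, a+l−1] ⊆ [1,L] such that ‖P_J ψ‖²/‖ψ‖² ≥ 1 − ε, where ε = 2E/(γ ⌊L/l⌋). Moreover, if ε < 1, then for this J, ⟨P_J ψ, H^XXZ_{[1,L]} P_J ψ⟩/‖P_J ψ‖² ≤ E/(1−ε) + 2Δ⁻¹ √(ε/(1−ε)). -/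
open scoped Classical

set_option synthInstance.maxHeartbeats 400000
set_option maxHeartbeats 1000000

noncomputable section Aux
open Finset

variable {L : ℕ}

lemma swapPair_invol (i j : Fin L) : Function.Involutive (swapPair i j) := by
  intro σ; funext k
  simp only [swapPair]
  split_ifs <;> simp_all

/-- the successor site (identity at the last site). -/
def nxt (x : Fin L) : Fin L := if h : (x : ℕ) + 1 < L then ⟨(x : ℕ) + 1, h⟩ else x

lemma nxt_val {x : Fin L} (h : (x : ℕ) + 1 < L) : (nxt x : ℕ) = (x : ℕ) + 1 := by
  simp [nxt, h]

/-- configurations with opposite spins at `i, j`. -/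
def oppSet (i j : Fin L) : Finset (SpinConf L) :=
  Finset.univ.filter fun σ => ¬ σ i = σ j

lemma swapPair_mem_oppSet {i j : Fin L} (hij : i ≠ j) {σ : SpinConf L} :
    swapPair i j σ ∈ oppSet i j ↔ σ ∈ oppSet i j := by
  have h1 : swapPair i j σ i = σ j := by simp [swapPair]
  have h2 : swapPair i j σ j = σ i := by simp [swapPair, hij.symm]
  simp [oppSet, h1, h2, eq_comm]

lemma sum_oppSet_swap {M : Type*} [AddCommMonoid M] {i j : Fin L} (hij : i ≠ j)
    (f : SpinConf L → M) :
    ∑ σ ∈ oppSet i j, f (swapPair i j σ) = ∑ σ ∈ oppSet i j, f σ := by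
  refine Finset.sum_equiv ((swapPair_invol i j).toPerm) ?_ ?_
  · intro σ; exact (swapPair_mem_oppSet hij).symm
  · intro σ _; rfl

/-- the sesquilinear form of a single bond. -/
def bq (Δ : ℝ) (i j : Fin L) (φ χ : SpinConf L → ℂ) : ℂ :=
  ∑ σ ∈ oppSet i j, (starRingEnd ℂ) (φ σ) *
    ((1/2 : ℂ) * χ σ - ((1/(2*Δ) : ℝ) : ℂ) * χ (swapPair i j σ))

lemma inner_bond (Δ : ℝ) (i j : Fin L) (φ χ : ChainSpace L) :
    (inner ℂ φ (Matrix.toEuclideanLin (bondMat Δ i j) χ) : ℂ) = bq Δ i j φ χ := by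
  rw [PiLp.inner_apply]
  have hM : ∀ σ, (Matrix.toEuclideanLin (bondMat Δ i j) χ) σ =
      ∑ τ, bondMat Δ i j σ τ * χ τ := by
    intro σ; rw [Matrix.toEuclideanLin_apply]; rfl
  simp only [RCLike.inner_apply', hM]
  rw [bq, ← Finset.sum_filter_add_sum_filter_not Finset.univ (fun σ => ¬ σ i = σ j)]
  have h2 : ∑ σ ∈ Finset.univ.filter (fun σ => ¬¬ σ i = σ j),
      (starRingEnd ℂ) (φ σ) * ∑ τ, bondMat Δ i j σ τ * χ τ = 0 := by
    apply Finset.sum_eq_zero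
    intro σ hσ
    simp only [Finset.mem_filter, not_not] at hσ
    have : ∀ τ, bondMat Δ i j σ τ = 0 := by intro τ; simp [bondMat, hσ.2]
    simp [this]
  rw [h2, add_zero]
  apply Finset.sum_congr rfl
  intro σ hσ
  simp only [oppSet, Finset.mem_filter] at hσ
  congr 1
  have hB : ∀ τ, bondMat Δ i j σ τ =
      (if τ = σ then (1/2 : ℂ) else 0) -
        ((1/(2*Δ) : ℝ) : ℂ) * (if τ = swapPair i j σ then 1 else 0) := by
    intro τ; simp [bondMat, hσ.2]
  simp only [hB, sub_mul, Finset.sum_sub_distrib, ite_mul, zero_mul, one_mul,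
    Finset.sum_ite_eq', Finset.mem_univ, if_true, mul_ite, mul_zero, mul_one]

lemma inner_xxz (Δ : ℝ) (φ χ : ChainSpace L) :
    (inner ℂ φ (Matrix.toEuclideanLin (xxzMat Δ L) χ) : ℂ) =
      ∑ x : Fin L, if h : (x : ℕ) + 1 < L then bq Δ x ⟨(x : ℕ) + 1, h⟩ φ χ else 0 := by
  have h1 : Matrix.toEuclideanLin (xxzMat Δ L) χ =
      ∑ x : Fin L, if h : (x : ℕ) + 1 < L then
        Matrix.toEuclideanLin (bondMat Δ x ⟨(x : ℕ) + 1, h⟩) χ else 0 := by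
    rw [xxzMat, map_sum, LinearMap.sum_apply]
    apply Finset.sum_congr rfl
    intro x _
    split <;> simp
  rw [h1, inner_sum]

  apply Finset.sum_congr rfl
  intro x _
  split
  · exact inner_bond _ _ _ _ _
  · simp

end Aux
noncomputable section Aux2
open Finset
variable {L : ℕ}

def Nsq (ψ : SpinConf L → ℂ) : ℝ := ∑ σ, ‖ψ σ‖^2

lemma Nsq_nonneg (ψ : SpinConf L → ℂ) : 0 ≤ Nsq ψ := by
  apply Finset.sum_nonneg; intros; positivity

lemma norm_sq_eq_Nsq (ψ : ChainSpace L) : ‖ψ‖^2 = Nsq ψ := by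
  rw [EuclideanSpace.norm_eq, Real.sq_sqrt]
  · rfl
  · apply Finset.sum_nonneg; intros; positivity

def Dq (i j : Fin L) (ψ : SpinConf L → ℂ) : ℝ := ∑ σ ∈ oppSet i j, ‖ψ σ‖^2

lemma Dq_nonneg (i j : Fin L) (ψ : SpinConf L → ℂ) : 0 ≤ Dq i j ψ := by
  apply Finset.sum_nonneg; intros; positivity

lemma re_term (Δ : ℝ) (a d : ℂ) :
    ((starRingEnd ℂ) a * ((1/2 : ℂ) * a - ((1/(2*Δ) : ℝ) : ℂ) * d)).re
      = (1/2) * ‖a‖^2 - (1/(2*Δ)) * ((starRingEnd ℂ) a * d).re := by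
  rw [mul_sub,
    show (starRingEnd ℂ) a * ((1/2 : ℂ) * a) = (1/2 : ℂ) * ((starRingEnd ℂ) a * a) by ring,
    RCLike.conj_mul,
    show (starRingEnd ℂ) a * (((1/(2*Δ) : ℝ) : ℂ) * d)
      = ((1/(2*Δ) : ℝ) : ℂ) * ((starRingEnd ℂ) a * d) by ring]
  simp [Complex.sub_re, Complex.re_ofReal_mul, ← Complex.ofReal_pow]

lemma sum_re_cross_le {i j : Fin L} (hij : i ≠ j) (ψ : SpinConf L → ℂ) :
    ∑ σ ∈ oppSet i j, ((starRingEnd ℂ) (ψ σ) * ψ (swapPair i j σ)).re ≤ Dq i j ψ := by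
  have h1 : ∀ σ ∈ oppSet i j, ((starRingEnd ℂ) (ψ σ) * ψ (swapPair i j σ)).re
      ≤ (‖ψ σ‖^2 + ‖ψ (swapPair i j σ)‖^2) / 2 := by
    intro σ _
    have h2 : ((starRingEnd ℂ) (ψ σ) * ψ (swapPair i j σ)).re
        ≤ ‖ψ σ‖ * ‖ψ (swapPair i j σ)‖ := by
      calc ((starRingEnd ℂ) (ψ σ) * ψ (swapPair i j σ)).re
          ≤ ‖(starRingEnd ℂ) (ψ σ) * ψ (swapPair i j σ)‖ := Complex.re_le_norm _
        _ = ‖ψ σ‖ * ‖ψ (swapPair i j σ)‖ := by rw [norm_mul, RCLike.norm_conj]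
    nlinarith [sq_nonneg (‖ψ σ‖ - ‖ψ (swapPair i j σ)‖)]
  calc ∑ σ ∈ oppSet i j, ((starRingEnd ℂ) (ψ σ) * ψ (swapPair i j σ)).re
      ≤ ∑ σ ∈ oppSet i j, (‖ψ σ‖^2 + ‖ψ (swapPair i j σ)‖^2) / 2 :=
        Finset.sum_le_sum h1
    _ = Dq i j ψ := by
        rw [← Finset.sum_div, Finset.sum_add_distrib,
          sum_oppSet_swap hij (fun σ => ‖ψ σ‖^2)]
        unfold Dq; ring

lemma bq_self_re_ge (Δ : ℝ) (hΔ : 1 < Δ) {i j : Fin L} (hij : i ≠ j) (ψ : SpinConf L → ℂ) :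
    (1 - Δ⁻¹)/2 * Dq i j ψ ≤ (bq Δ i j ψ ψ).re := by
  have hΔ0 : (0:ℝ) < Δ := by linarith
  have hre : (bq Δ i j ψ ψ).re = ∑ σ ∈ oppSet i j,
      ((1/2) * ‖ψ σ‖^2 - (1/(2*Δ)) * ((starRingEnd ℂ) (ψ σ) * ψ (swapPair i j σ)).re) := by
    rw [bq, Complex.re_sum]
    exact Finset.sum_congr rfl fun σ _ => re_term Δ _ _
  rw [hre, Finset.sum_sub_distrib, ← Finset.mul_sum, ← Finset.mul_sum]
  have hcross := sum_re_cross_le hij ψ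
  have hc : (0:ℝ) < 1/(2*Δ) := by positivity
  have heq : (1:ℝ)/2 - 1/(2*Δ) = (1 - Δ⁻¹)/2 := by
    field_simp
  have hDq_def : ∑ σ ∈ oppSet i j, ‖ψ σ‖^2 = Dq i j ψ := rfl
  rw [hDq_def]
  have h2 := mul_le_mul_of_nonneg_left hcross (le_of_lt hc)
  have h3 : ((1:ℝ)/2 - 1/(2*Δ)) * Dq i j ψ = (1 - Δ⁻¹)/2 * Dq i j ψ := by rw [heq]
  nlinarith [h2, h3]

lemma bq_self_re_nonneg (Δ : ℝ) (hΔ : 1 < Δ) {i j : Fin L} (hij : i ≠ j)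
    (ψ : SpinConf L → ℂ) : 0 ≤ (bq Δ i j ψ ψ).re := by
  have h := bq_self_re_ge Δ hΔ hij ψ
  have h2 : (0:ℝ) ≤ (1 - Δ⁻¹)/2 := by
    have : Δ⁻¹ ≤ 1 := by rw [inv_le_one_iff₀]; right; linarith
    linarith
  nlinarith [Dq_nonneg i j ψ]

end Aux2
noncomputable section Aux3
open Finset
variable {L : ℕ}

lemma bq_eq_of_disj (Δ : ℝ) {i j : Fin L} (φ χ : SpinConf L → ℂ)
    (h : ∀ σ, φ σ = 0 ∨ χ σ = 0) :
    bq Δ i j φ χ = - (((1/(2*Δ) : ℝ) : ℂ) *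
      ∑ σ ∈ oppSet i j, (starRingEnd ℂ) (φ σ) * χ (swapPair i j σ)) := by
  rw [bq, Finset.mul_sum, ← Finset.sum_neg_distrib]
  apply Finset.sum_congr rfl
  intro σ _
  rcases h σ with h0 | h0 <;> simp [h0] <;> ring

lemma bq_zero_of_swap (Δ : ℝ) {i j : Fin L} (φ χ : SpinConf L → ℂ)
    (h : ∀ σ, φ σ = 0 ∨ χ σ = 0)
    (h2 : ∀ σ, φ σ = 0 ∨ χ (swapPair i j σ) = 0) :
    bq Δ i j φ χ = 0 := by
  rw [bq_eq_of_disj Δ φ χ h]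
  have : ∀ σ ∈ oppSet i j, (starRingEnd ℂ) (φ σ) * χ (swapPair i j σ) = 0 := by
    intro σ _
    rcases h2 σ with h0 | h0 <;> simp [h0]
  rw [Finset.sum_congr rfl this]
  simp

lemma sum_prod_le_sqrt {s : Finset (SpinConf L)} (f g : SpinConf L → ℝ)
    (hf : ∀ σ, 0 ≤ f σ) (hg : ∀ σ, 0 ≤ g σ) :
    ∑ σ ∈ s, f σ * g σ ≤
      Real.sqrt (∑ σ ∈ s, f σ ^ 2) * Real.sqrt (∑ σ ∈ s, g σ ^ 2) := by
  have hcs := Finset.sum_mul_sq_le_sq_mul_sq s f g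
  have h1 : (0:ℝ) ≤ ∑ σ ∈ s, f σ * g σ := by
    apply Finset.sum_nonneg; intro σ _; exact mul_nonneg (hf σ) (hg σ)
  have h2 : (0:ℝ) ≤ ∑ σ ∈ s, f σ ^ 2 := by apply Finset.sum_nonneg; intros; positivity
  have h3 : (0:ℝ) ≤ ∑ σ ∈ s, g σ ^ 2 := by apply Finset.sum_nonneg; intros; positivity
  calc ∑ σ ∈ s, f σ * g σ = Real.sqrt ((∑ σ ∈ s, f σ * g σ)^2) := by
        rw [Real.sqrt_sq h1]
    _ ≤ Real.sqrt ((∑ σ ∈ s, f σ ^ 2) * ∑ σ ∈ s, g σ ^ 2) := Real.sqrt_le_sqrt hcs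
    _ = _ := Real.sqrt_mul h2 _

lemma bq_re_abs_le (Δ : ℝ) (hΔ : 1 < Δ) {i j : Fin L} (hij : i ≠ j)
    (φ χ : SpinConf L → ℂ) (h : ∀ σ, φ σ = 0 ∨ χ σ = 0) :
    |(bq Δ i j φ χ).re| ≤ (1/(2*Δ)) * (Real.sqrt (Nsq φ) * Real.sqrt (Nsq χ)) := by
  have hΔ0 : (0:ℝ) < Δ := by linarith
  have hc : (0:ℝ) ≤ 1/(2*Δ) := by positivity
  rw [bq_eq_of_disj Δ φ χ h]
  set S : ℂ := ∑ σ ∈ oppSet i j, (starRingEnd ℂ) (φ σ) * χ (swapPair i j σ) with hS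
  have h1 : |(-(((1/(2*Δ) : ℝ) : ℂ) * S)).re| = (1/(2*Δ)) * |S.re| := by
    rw [Complex.neg_re, abs_neg, Complex.re_ofReal_mul, abs_mul, abs_of_nonneg hc]
  rw [h1]
  apply mul_le_mul_of_nonneg_left _ hc
  calc |S.re| ≤ ‖S‖ := Complex.abs_re_le_norm S
    _ ≤ ∑ σ ∈ oppSet i j, ‖(starRingEnd ℂ) (φ σ) * χ (swapPair i j σ)‖ := norm_sum_le _ _
    _ = ∑ σ ∈ oppSet i j, ‖φ σ‖ * ‖χ (swapPair i j σ)‖ := by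
        apply Finset.sum_congr rfl; intro σ _; rw [norm_mul, RCLike.norm_conj]
    _ ≤ Real.sqrt (∑ σ ∈ oppSet i j, ‖φ σ‖^2) *
        Real.sqrt (∑ σ ∈ oppSet i j, ‖χ (swapPair i j σ)‖^2) :=
        sum_prod_le_sqrt _ _ (fun _ => norm_nonneg _) (fun _ => norm_nonneg _)
    _ ≤ Real.sqrt (Nsq φ) * Real.sqrt (Nsq χ) := by
        apply mul_le_mul
        · apply Real.sqrt_le_sqrt
          apply Finset.sum_le_sum_of_subset_of_nonneg (Finset.subset_univ _)
          intros; positivity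
        · rw [sum_oppSet_swap hij (fun σ => ‖χ σ‖^2)]
          apply Real.sqrt_le_sqrt
          apply Finset.sum_le_sum_of_subset_of_nonneg (Finset.subset_univ _)
          intros; positivity
        · positivity
        · positivity

end Aux3
noncomputable section Aux4
open Finset
variable {L : ℕ}

def polP (L a l : ℕ) (σ : SpinConf L) : Prop :=
  (∀ i : Fin L, a ≤ (i:ℕ)+1 → (i:ℕ)+1 ≤ a+l-1 → σ i = false) ∨
  (∀ i : Fin L, a ≤ (i:ℕ)+1 → (i:ℕ)+1 ≤ a+l-1 → σ i = true)

lemma pJ_apply (ψ : ChainSpace L) (a l : ℕ) (σ : SpinConf L) :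
    pJ L a l ψ σ = if polP L a l σ then ψ σ else 0 := by
  simp only [pJ, polP, PiLp.toLp_apply]
  split_ifs with h1 h2 h3 <;> simp_all

lemma exists_discord_nat (f : ℕ → Bool) :
    ∀ t s, s ≤ t → f s ≠ f t → ∃ i, s ≤ i ∧ i < t ∧ f i ≠ f (i+1) := by
  intro t
  induction t with
  | zero =>
    intro s hs hne
    have h0 : s = 0 := by omega
    subst h0; exact absurd rfl hne
  | succ t ih =>
    intro s hs hne
    by_cases hst : s = t + 1
    · subst hst; exact absurd rfl hne
    · have hs' : s ≤ t := by omega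
      by_cases hft : f s = f t
      · exact ⟨t, hs', by omega, by rw [← hft]; exact hne⟩
      · obtain ⟨i, h1, h2, h3⟩ := ih s hs' hft
        exact ⟨i, h1, by omega, h3⟩

lemma discord_of_not_pol {σ : SpinConf L} {a l : ℕ} (ha : 1 ≤ a) (hl : 1 ≤ l)
    (hal : a + l - 1 ≤ L) (hnp : ¬ polP L a l σ) :
    ∃ x : Fin L, (x:ℕ)+1 < L ∧ a ≤ (x:ℕ)+1 ∧ (x:ℕ)+2 ≤ a+l-1 ∧ σ x ≠ σ (nxt x) := by
  rw [polP, not_or] at hnp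
  obtain ⟨h1, h2⟩ := hnp
  push_neg at h1 h2
  obtain ⟨i1, hi1a, hi1b, hi1⟩ := h1
  obtain ⟨i2, hi2a, hi2b, hi2⟩ := h2
  have hv1 : σ i1 = true := by simpa using hi1
  have hv2 : σ i2 = false := by simpa using hi2
  set f : ℕ → Bool := fun n => if h : n < L then σ ⟨n, h⟩ else false with hf
  have hσf : ∀ i : Fin L, f (i : ℕ) = σ i := by
    intro i; simp [hf, i.isLt]
  have key : ∀ p q : ℕ, p ≤ q → q < L → a ≤ p + 1 → q + 1 ≤ a + l - 1 →
      f p ≠ f q → ∃ x : Fin L, (x:ℕ)+1 < L ∧ a ≤ (x:ℕ)+1 ∧ (x:ℕ)+2 ≤ a+l-1 ∧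
        σ x ≠ σ (nxt x) := by
    intro p q hpq hqL hap hq hne
    obtain ⟨i, hi1, hi2, hi3⟩ := exists_discord_nat f q p hpq hne
    have hiL : i < L := by omega
    have hi1L : i + 1 < L := by omega
    have hA : a ≤ i + 1 := by omega
    have hB : i + 2 ≤ a + l - 1 := by omega
    refine ⟨⟨i, hiL⟩, by simpa using hi1L, by simpa using hA, by simpa using hB, ?_⟩
    have hnxt : nxt (⟨i, hiL⟩ : Fin L) = ⟨i+1, hi1L⟩ := by
      simp [nxt, hi1L]
    rw [hnxt]
    intro hcon
    apply hi3
    rw [← hσf ⟨i, hiL⟩, ← hσf ⟨i+1, hi1L⟩] at hcon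
    exact hcon
  rcases le_or_gt (i1 : ℕ) (i2 : ℕ) with hle | hlt
  · exact key i1 i2 hle i2.isLt hi1a hi2b (by rw [hσf, hσf, hv1, hv2]; simp)
  · exact key i2 i1 (le_of_lt hlt) i1.isLt hi2a hi1b (by rw [hσf, hσf, hv1, hv2]; simp)

lemma count_blocks (σ : SpinConf L) (l m : ℕ) (hl : 1 ≤ l) (hml : m * l ≤ L)
    (hL : 0 < L) :
    ((Finset.range m).filter fun k => ¬ polP L (k*l+1) l σ).card ≤
      (Finset.univ.filter fun x : Fin L => (x:ℕ)+1 < L ∧ σ x ≠ σ (nxt x)).card := by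
  have hwit : ∀ k ∈ (Finset.range m).filter fun k => ¬ polP L (k*l+1) l σ,
      ∃ x : Fin L, (x:ℕ)+1 < L ∧ (k*l+1) ≤ (x:ℕ)+1 ∧ (x:ℕ)+2 ≤ (k*l+1)+l-1 ∧
        σ x ≠ σ (nxt x) := by
    intro k hk
    rw [Finset.mem_filter, Finset.mem_range] at hk
    apply discord_of_not_pol (by omega) hl _ hk.2
    have : (k+1) * l ≤ m * l := Nat.mul_le_mul_right l hk.1
    have : (k+1) * l = k*l + l := by ring
    omega
  classical
  set g : ℕ → Fin L := fun k =>
    if h : ∃ x : Fin L, (x:ℕ)+1 < L ∧ (k*l+1) ≤ (x:ℕ)+1 ∧ (x:ℕ)+2 ≤ (k*l+1)+l-1 ∧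
        σ x ≠ σ (nxt x) then h.choose else ⟨0, hL⟩ with hg
  apply Finset.card_le_card_of_injOn g
  · intro k hk
    obtain h := hwit k hk
    rw [hg]
    simp only [dif_pos h]
    obtain ⟨hx1, _, _, hx4⟩ := h.choose_spec
    exact Finset.mem_filter.mpr ⟨Finset.mem_univ _, hx1, hx4⟩
  · intro k1 hk1 k2 hk2 hgeq
    obtain h1 := hwit k1 hk1
    obtain h2 := hwit k2 hk2
    rw [hg] at hgeq
    simp only [dif_pos h1, dif_pos h2] at hgeq
    obtain ⟨_, ha1, hb1, _⟩ := h1.choose_spec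
    obtain ⟨_, ha2, hb2, _⟩ := h2.choose_spec
    rw [hgeq] at ha1 hb1
    by_contra hne
    rcases lt_or_gt_of_ne hne with hlt | hlt
    · have : (k1+1) * l ≤ k2 * l := Nat.mul_le_mul_right l hlt
      have : (k1+1) * l = k1*l + l := by ring
      omega
    · have : (k2+1) * l ≤ k1 * l := Nat.mul_le_mul_right l hlt
      have : (k2+1) * l = k2*l + l := by ring
      omega

end Aux4
noncomputable section Aux5
open Finset
variable {L : ℕ}

lemma fin_ne_of_val_ne {i j : Fin L} (h : (i:ℕ) ≠ (j:ℕ)) : i ≠ j :=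
  fun hc => h (by rw [hc])

lemma polP_swap {a l : ℕ} (ha : 1 ≤ a) (hl : 1 ≤ l) {x : Fin L} (hx : (x:ℕ)+1 < L)
    (hsafe : ¬ ((x:ℕ)+2 = a ∨ (x:ℕ)+1 = a+l-1)) (σ : SpinConf L) :
    polP L a l (swapPair x (nxt x) σ) ↔ polP L a l σ := by
  push_neg at hsafe
  obtain ⟨hs1, hs2⟩ := hsafe
  have hnv : (nxt x : ℕ) = (x:ℕ)+1 := nxt_val hx
  rcases le_or_gt a ((x:ℕ)+1) with hin1 | hout1
  · rcases le_or_gt ((x:ℕ)+2) (a+l-1) with hin2 | hout2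
    · -- both endpoints inside J
      have key : ∀ (τ : SpinConf L) (b : Bool),
          (∀ i : Fin L, a ≤ (i:ℕ)+1 → (i:ℕ)+1 ≤ a+l-1 → τ i = b) →
          (∀ i : Fin L, a ≤ (i:ℕ)+1 → (i:ℕ)+1 ≤ a+l-1 →
            swapPair x (nxt x) τ i = b) := by
        intro τ b H i h1 h2
        simp only [swapPair]
        split_ifs with e1 e2
        · exact H (nxt x) (by omega) (by omega)
        · exact H x (by omega) (by omega)
        · exact H i h1 h2
      constructor
      · intro H
        have H' := H
        rcases H' with H1 | H1
        · left
          intro i h1 h2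
          have := key _ false H1 i h1 h2
          rwa [swapPair_invol x (nxt x) σ] at this
        · right
          intro i h1 h2
          have := key _ true H1 i h1 h2
          rwa [swapPair_invol x (nxt x) σ] at this
      · rintro (H1 | H1)
        · exact Or.inl (key σ false H1)
        · exact Or.inr (key σ true H1)
    · -- both endpoints to the right of J
      have hagree : ∀ i : Fin L, a ≤ (i:ℕ)+1 → (i:ℕ)+1 ≤ a+l-1 →
          swapPair x (nxt x) σ i = σ i := by
        intro i h1 h2
        have hix : i ≠ x := fin_ne_of_val_ne (by omega)
        have hinx : i ≠ nxt x := fin_ne_of_val_ne (by omega)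
        simp only [swapPair, if_neg hix, if_neg hinx]
      constructor <;> rintro (H1 | H1)
      · exact Or.inl fun i h1 h2 => by rw [← hagree i h1 h2]; exact H1 i h1 h2
      · exact Or.inr fun i h1 h2 => by rw [← hagree i h1 h2]; exact H1 i h1 h2
      · exact Or.inl fun i h1 h2 => by rw [hagree i h1 h2]; exact H1 i h1 h2
      · exact Or.inr fun i h1 h2 => by rw [hagree i h1 h2]; exact H1 i h1 h2
  · -- both endpoints to the left of J
    have hagree : ∀ i : Fin L, a ≤ (i:ℕ)+1 → (i:ℕ)+1 ≤ a+l-1 →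
        swapPair x (nxt x) σ i = σ i := by
      intro i h1 h2
      have hix : i ≠ x := fin_ne_of_val_ne (by omega)
      have hinx : i ≠ nxt x := fin_ne_of_val_ne (by omega)
      simp only [swapPair, if_neg hix, if_neg hinx]
    constructor <;> rintro (H1 | H1)
    · exact Or.inl fun i h1 h2 => by rw [← hagree i h1 h2]; exact H1 i h1 h2
    · exact Or.inr fun i h1 h2 => by rw [← hagree i h1 h2]; exact H1 i h1 h2
    · exact Or.inl fun i h1 h2 => by rw [hagree i h1 h2]; exact H1 i h1 h2
    · exact Or.inr fun i h1 h2 => by rw [hagree i h1 h2]; exact H1 i h1 h2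

lemma card_boundary (a l : ℕ) :
    ((Finset.univ : Finset (Fin L)).filter
      fun x : Fin L => (x:ℕ)+2 = a ∨ (x:ℕ)+1 = a+l-1).card ≤ 2 := by
  classical
  rw [Finset.filter_or]
  refine le_trans (Finset.card_union_le _ _) ?_
  have h1 : (Finset.filter (fun x : Fin L => (x:ℕ)+2 = a) Finset.univ).card ≤ 1 := by
    apply Finset.card_le_one.mpr
    intro x hx y hy
    rw [Finset.mem_filter] at hx hy
    exact Fin.ext (by omega)
  have h2 : (Finset.filter (fun x : Fin L => (x:ℕ)+1 = a+l-1) Finset.univ).card ≤ 1 := by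
    apply Finset.card_le_one.mpr
    intro x hx y hy
    rw [Finset.mem_filter] at hx hy
    exact Fin.ext (by omega)
  omega

end Aux5
noncomputable section Aux6
open Finset
variable {L : ℕ}

lemma energy_ge (Δ : ℝ) (hΔ : 1 < Δ) (ψ : ChainSpace L) :
    (1-Δ⁻¹)/2 * (∑ x : Fin L, if h : (x:ℕ)+1 < L then Dq x (nxt x) ψ else 0)
      ≤ (inner ℂ ψ (Matrix.toEuclideanLin (xxzMat Δ L) ψ) : ℂ).re := by
  rw [inner_xxz, Complex.re_sum, Finset.mul_sum]
  apply Finset.sum_le_sum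
  intro x _
  split_ifs with h
  · have hnxt : (⟨(x:ℕ)+1, h⟩ : Fin L) = nxt x := by simp [nxt, h]
    rw [← hnxt]
    have hij : x ≠ (⟨(x:ℕ)+1, h⟩ : Fin L) := fin_ne_of_val_ne (by simp)
    have := bq_self_re_ge Δ hΔ hij (fun σ => ψ σ)
    rw [hnxt] at this ⊢
    rw [← hnxt] at this ⊢
    exact this
  · simp

lemma sum_blocks_le (ψ : SpinConf L → ℂ) (l m : ℕ) (hl : 1 ≤ l) (hml : m*l ≤ L)
    (hL : 0 < L) :
    ∑ k ∈ Finset.range m, (∑ σ : SpinConf L, if polP L (k*l+1) l σ then 0 else ‖ψ σ‖^2)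
      ≤ ∑ x : Fin L, if h : (x:ℕ)+1 < L then Dq x (nxt x) ψ else 0 := by
  classical
  have hLHS : ∑ k ∈ Finset.range m,
      (∑ σ : SpinConf L, if polP L (k*l+1) l σ then 0 else ‖ψ σ‖^2)
      = ∑ σ : SpinConf L,
        (((Finset.range m).filter fun k => ¬ polP L (k*l+1) l σ).card : ℝ) * ‖ψ σ‖^2 := by
    rw [Finset.sum_comm]
    apply Finset.sum_congr rfl
    intro σ _
    have h1 : ∀ k, (if polP L (k*l+1) l σ then (0:ℝ) else ‖ψ σ‖^2)
        = if ¬ polP L (k*l+1) l σ then ‖ψ σ‖^2 else 0 := by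
      intro k; by_cases h : polP L (k*l+1) l σ <;> simp [h]
    simp only [h1]
    rw [← Finset.sum_filter, Finset.sum_const, nsmul_eq_mul]
  have hRHS : ∑ x : Fin L, (if h : (x:ℕ)+1 < L then Dq x (nxt x) ψ else 0)
      = ∑ σ : SpinConf L,
        ((((Finset.univ : Finset (Fin L)).filter
          fun x : Fin L => (x:ℕ)+1 < L ∧ σ x ≠ σ (nxt x)).card : ℝ)) * ‖ψ σ‖^2 := by
    have h2 : ∀ x : Fin L, (if h : (x:ℕ)+1 < L then Dq x (nxt x) ψ else 0)
        = ∑ σ : SpinConf L, if (x:ℕ)+1 < L ∧ σ x ≠ σ (nxt x) then ‖ψ σ‖^2 else 0 := by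
      intro x
      split_ifs with h
      · rw [Dq, oppSet, ← Finset.sum_filter]
        apply Finset.sum_congr _ (fun _ _ => rfl)
        apply Finset.filter_congr
        intro σ _
        simp [h]
      · symm
        apply Finset.sum_eq_zero
        intro σ _
        rw [if_neg (by tauto)]
    simp only [h2]
    rw [Finset.sum_comm]
    apply Finset.sum_congr rfl
    intro σ _
    rw [← Finset.sum_filter, Finset.sum_const, nsmul_eq_mul]
  rw [hLHS, hRHS]
  apply Finset.sum_le_sum
  intro σ _
  apply mul_le_mul_of_nonneg_right _ (by positivity)
  exact_mod_cast Nat.cast_le.mpr (count_blocks σ l m hl hml hL)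

lemma cross_bound (Δ : ℝ) (hΔ : 1 < Δ) {a l : ℕ}
    (φ χ : ChainSpace L)
    (hdisj : ∀ σ, φ σ = 0 ∨ χ σ = 0)
    (hswap : ∀ x : Fin L, (x:ℕ)+1 < L → ¬((x:ℕ)+2 = a ∨ (x:ℕ)+1 = a+l-1) →
      ∀ σ, φ σ = 0 ∨ χ (swapPair x (nxt x) σ) = 0) :
    |(inner ℂ φ (Matrix.toEuclideanLin (xxzMat Δ L) χ) : ℂ).re|
      ≤ 2 * ((1/(2*Δ)) * (Real.sqrt (Nsq φ) * Real.sqrt (Nsq χ))) := by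
  have hΔ0 : (0:ℝ) < Δ := lt_trans one_pos hΔ
  rw [inner_xxz, Complex.re_sum]
  set B : ℝ := (1/(2*Δ)) * (Real.sqrt (Nsq φ) * Real.sqrt (Nsq χ)) with hB
  have hB0 : 0 ≤ B := by
    apply mul_nonneg (div_nonneg zero_le_one (by linarith))
    exact mul_nonneg (Real.sqrt_nonneg _) (Real.sqrt_nonneg _)
  calc |∑ x : Fin L, (if h : (x:ℕ)+1 < L then bq Δ x ⟨(x:ℕ)+1, h⟩ φ χ else 0).re|
      ≤ ∑ x : Fin L, |(if h : (x:ℕ)+1 < L then bq Δ x ⟨(x:ℕ)+1, h⟩ φ χ else 0).re| :=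
        Finset.abs_sum_le_sum_abs _ _
    _ ≤ ∑ x : Fin L, (if (x:ℕ)+2 = a ∨ (x:ℕ)+1 = a+l-1 then B else 0) := by
        apply Finset.sum_le_sum
        intro x _
        by_cases h : (x:ℕ)+1 < L
        · rw [dif_pos h]
          have hnxt : (⟨(x:ℕ)+1, h⟩ : Fin L) = nxt x := by simp [nxt, h]
          have hij : x ≠ (⟨(x:ℕ)+1, h⟩ : Fin L) := fin_ne_of_val_ne (by simp)
          by_cases hsafe : (x:ℕ)+2 = a ∨ (x:ℕ)+1 = a+l-1
          · rw [if_pos hsafe]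
            exact bq_re_abs_le Δ hΔ hij (fun σ => φ σ) (fun σ => χ σ) hdisj
          · rw [if_neg hsafe]
            have hz := bq_zero_of_swap Δ (i := x) (j := ⟨(x:ℕ)+1, h⟩)
              (fun σ => φ σ) (fun σ => χ σ) hdisj
              (by rw [hnxt]; exact hswap x h hsafe)
            rw [hz]
            simp
        · rw [dif_neg h]
          simp only [Complex.zero_re, abs_zero]
          split_ifs <;> simp [hB0]
    _ ≤ 2 * B := by
        rw [← Finset.sum_filter, Finset.sum_const, nsmul_eq_mul]
        apply mul_le_mul_of_nonneg_right _ hB0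
        exact_mod_cast Nat.cast_le.mpr (card_boundary a l)

end Aux6
/-- existence of an almost fully polarized subinterval.  For any nonzero state
`ψ` with energy `E` and any `1 ≤ l < L`, there is a subinterval `J = [a, a+l−1] ⊆ [1,L]`
with `‖P_J ψ‖²/‖ψ‖² ≥ 1 − ε`, `ε = 2E/(γ⌊L/l⌋)`, `γ = 1 − Δ⁻¹`; and if `ε < 1` the
projected state has energy at most `E/(1−ε) + 2Δ⁻¹√(ε/(1−ε))`. -/
theorem stmt12 (Δ : ℝ) (hΔ : 1 < Δ) (L : ℕ) (hL : 2 ≤ L)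
    (ψ : ChainSpace L) (hψ : ψ ≠ 0)
    (E : ℝ) (hE : E = (inner ℂ ψ (Matrix.toEuclideanLin (xxzMat Δ L) ψ) : ℂ).re / ‖ψ‖ ^ 2)
    (l : ℕ) (hl1 : 1 ≤ l) (hlL : l < L)
    (ε : ℝ) (hε : ε = 2 * E / ((1 - Δ⁻¹) * ((L / l : ℕ) : ℝ))) :
    ∃ a : ℕ, 1 ≤ a ∧ a + l - 1 ≤ L ∧
      1 - ε ≤ ‖pJ L a l ψ‖ ^ 2 / ‖ψ‖ ^ 2 ∧
      (ε < 1 →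
        (inner ℂ (pJ L a l ψ) (Matrix.toEuclideanLin (xxzMat Δ L) (pJ L a l ψ)) : ℂ).re /
            ‖pJ L a l ψ‖ ^ 2
          ≤ E / (1 - ε) + 2 * Δ⁻¹ * Real.sqrt (ε / (1 - ε))) := by
  classical
  have hΔ0 : (0:ℝ) < Δ := lt_trans one_pos hΔ
  have hγ : (0:ℝ) < 1 - Δ⁻¹ := by
    have h1 : Δ⁻¹ < 1 := by rw [inv_eq_one_div, div_lt_one hΔ0]; exact hΔ
    linarith
  have hψn : (0:ℝ) < ‖ψ‖^2 := by
    have h1 : ‖ψ‖ ≠ 0 := fun h => hψ (norm_eq_zero.mp h)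
    positivity
  set m := L / l with hm
  have hm1 : 1 ≤ m := (Nat.one_le_div_iff (by omega)).mpr (le_of_lt hlL)
  have hml : m * l ≤ L := Nat.div_mul_le_self L l
  have hLpos : 0 < L := by omega
  have hmR : (1:ℝ) ≤ (m:ℝ) := by exact_mod_cast hm1
  have hmne : (m:ℝ) ≠ 0 := by linarith
  -- nonnegativity of the energy
  have hQre := energy_ge Δ hΔ ψ
  have hDnn : 0 ≤ ∑ x : Fin L, (if h : (x:ℕ)+1 < L then Dq x (nxt x) ψ else 0) := by
    apply Finset.sum_nonneg; intro x _; split_ifs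
    exacts [Dq_nonneg _ _ _, le_refl 0]
  have hQ0 : 0 ≤ (inner ℂ ψ (Matrix.toEuclideanLin (xxzMat Δ L) ψ) : ℂ).re := by nlinarith
  have hE0 : 0 ≤ E := by rw [hE]; exact div_nonneg hQ0 (by positivity)
  have hQE : (inner ℂ ψ (Matrix.toEuclideanLin (xxzMat Δ L) ψ) : ℂ).re = E * ‖ψ‖^2 := by
    rw [hE, div_mul_cancel₀]; exact ne_of_gt hψn
  have hε0 : 0 ≤ ε := by
    rw [hε]
    exact div_nonneg (by linarith) (mul_nonneg hγ.le (Nat.cast_nonneg m))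
  -- pigeonhole over the m disjoint blocks
  have hsum := sum_blocks_le (fun σ => ψ σ) l m hl1 hml hLpos
  have hDbound : ∑ x : Fin L, (if h : (x:ℕ)+1 < L then Dq x (nxt x) ψ else 0)
      ≤ 2/(1-Δ⁻¹) * (E * ‖ψ‖^2) := by
    rw [div_mul_eq_mul_div, le_div_iff₀ hγ]
    nlinarith [hQre, hQE]
  have hchain : ∑ k ∈ Finset.range m,
      (∑ σ : SpinConf L, if polP L (k*l+1) l σ then 0 else ‖ψ σ‖^2)
      ≤ ∑ k ∈ Finset.range m, (ε * ‖ψ‖^2) := by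
    rw [Finset.sum_const, Finset.card_range, nsmul_eq_mul]
    have h2 : (m:ℝ) * (ε * ‖ψ‖^2) = 2/(1-Δ⁻¹) * (E * ‖ψ‖^2) := by
      rw [hε]
      field_simp [hmne, ne_of_gt hγ]
    rw [h2]
    exact le_trans hsum hDbound
  obtain ⟨k, hkmem, hkle⟩ := Finset.exists_le_of_sum_le
    ⟨0, Finset.mem_range.mpr (by omega)⟩ hchain
  rw [Finset.mem_range] at hkmem
  set a := k*l+1 with ha
  set χv : ChainSpace L := WithLp.toLp 2 (fun σ => if polP L a l σ then 0 else ψ σ) with hχv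
  have hNχ : Nsq χv ≤ ε * ‖ψ‖^2 := by
    refine le_trans (le_of_eq ?_) hkle
    rw [Nsq]
    apply Finset.sum_congr rfl
    intro σ _
    by_cases h : polP L a l σ <;> simp [hχv, h]
  have hadd : Nsq (pJ L a l ψ) + Nsq χv = ‖ψ‖^2 := by
    rw [norm_sq_eq_Nsq, Nsq, Nsq, Nsq, ← Finset.sum_add_distrib]
    apply Finset.sum_congr rfl
    intro σ _
    rw [pJ_apply]
    by_cases h : polP L a l σ <;> simp [hχv, h]
  have hNP : ‖pJ L a l ψ‖^2 = Nsq (pJ L a l ψ) := norm_sq_eq_Nsq _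
  have hPge : (1-ε) * ‖ψ‖^2 ≤ ‖pJ L a l ψ‖^2 := by
    rw [hNP]; nlinarith [hNχ, hadd]
  refine ⟨a, by omega, ?_, ?_, ?_⟩
  · have h1 : (k+1) * l ≤ m * l := Nat.mul_le_mul_right l hkmem
    have h2 : (k+1) * l = k*l + l := by ring
    omega
  · rw [le_div_iff₀ hψn]
    exact hPge
  · intro hε1
    have h1ε : (0:ℝ) < 1 - ε := by linarith
    have hPpos : (0:ℝ) < ‖pJ L a l ψ‖^2 := lt_of_lt_of_le (by nlinarith) hPge
    -- decomposition of the quadratic form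
    have hφχ : pJ L a l ψ + χv = ψ := by
      ext σ
      show pJ L a l ψ σ + χv σ = ψ σ
      rw [pJ_apply]
      by_cases h : polP L a l σ <;> simp [hχv, h]
    have hgen : ∀ u v : ChainSpace L, (inner ℂ (u+v) (Matrix.toEuclideanLin (xxzMat Δ L) (u+v)) : ℂ)
        = inner ℂ u (Matrix.toEuclideanLin (xxzMat Δ L) u)
          + inner ℂ v (Matrix.toEuclideanLin (xxzMat Δ L) v)
          + (inner ℂ u (Matrix.toEuclideanLin (xxzMat Δ L) v)
            + inner ℂ v (Matrix.toEuclideanLin (xxzMat Δ L) u)) := by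
      intro u v
      rw [map_add, inner_add_left, inner_add_right, inner_add_right]
      ring
    have hdecomp := hgen (pJ L a l ψ) χv
    rw [hφχ] at hdecomp
    have hQχ0 : 0 ≤ (inner ℂ χv (Matrix.toEuclideanLin (xxzMat Δ L) χv) : ℂ).re := by
      have e1 := energy_ge Δ hΔ χv
      have e2 : 0 ≤ ∑ x : Fin L, (if h : (x:ℕ)+1 < L then Dq x (nxt x) χv else 0) := by
        apply Finset.sum_nonneg; intro x _; split_ifs
        exacts [Dq_nonneg _ _ _, le_refl 0]
      nlinarith
    -- cross terms
    have hdisj : ∀ σ, pJ L a l ψ σ = 0 ∨ χv σ = 0 := by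
      intro σ
      rw [pJ_apply]
      by_cases h : polP L a l σ <;> simp [hχv, h]
    have hdisj' : ∀ σ, χv σ = 0 ∨ pJ L a l ψ σ = 0 := fun σ => (hdisj σ).symm
    have hswap1 : ∀ x : Fin L, (x:ℕ)+1 < L → ¬((x:ℕ)+2 = a ∨ (x:ℕ)+1 = a+l-1) →
        ∀ σ, pJ L a l ψ σ = 0 ∨ χv (swapPair x (nxt x) σ) = 0 := by
      intro x hx hsafe σ
      by_cases h : polP L a l σ
      · right
        have h2 := (polP_swap (by omega) hl1 hx hsafe σ).mpr h
        simp [hχv, h2]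
      · left; rw [pJ_apply, if_neg h]
    have hswap2 : ∀ x : Fin L, (x:ℕ)+1 < L → ¬((x:ℕ)+2 = a ∨ (x:ℕ)+1 = a+l-1) →
        ∀ σ, χv σ = 0 ∨ pJ L a l ψ (swapPair x (nxt x) σ) = 0 := by
      intro x hx hsafe σ
      by_cases h : polP L a l σ
      · left; simp [hχv, h]
      · right
        rw [pJ_apply, if_neg]
        intro hcon
        exact h ((polP_swap (by omega) hl1 hx hsafe σ).mp hcon)
    have hc1 := cross_bound Δ hΔ (a := a) (l := l) (pJ L a l ψ) χv hdisj hswap1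
    have hc2 := cross_bound Δ hΔ (a := a) (l := l) χv (pJ L a l ψ) hdisj' hswap2
    -- numerics
    set P := ‖pJ L a l ψ‖^2 with hP
    set Cq := Nsq χv with hCq
    have hP0 : (0:ℝ) ≤ P := le_of_lt hPpos
    have hCq0 : (0:ℝ) ≤ Cq := Nsq_nonneg _
    have hNsqP : Nsq (pJ L a l ψ) = P := hNP.symm
    rw [hNsqP] at hc1 hc2
    have hre : (inner ℂ (pJ L a l ψ) (Matrix.toEuclideanLin (xxzMat Δ L) (pJ L a l ψ)) : ℂ).re
        = (inner ℂ ψ (Matrix.toEuclideanLin (xxzMat Δ L) ψ) : ℂ).re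
          - (inner ℂ χv (Matrix.toEuclideanLin (xxzMat Δ L) χv) : ℂ).re
          - ((inner ℂ (pJ L a l ψ) (Matrix.toEuclideanLin (xxzMat Δ L) χv) : ℂ).re
            + (inner ℂ χv (Matrix.toEuclideanLin (xxzMat Δ L) (pJ L a l ψ)) : ℂ).re) := by
      rw [hdecomp]
      simp [Complex.add_re]
      ring
    have hδinv : (0:ℝ) ≤ Δ⁻¹ := inv_nonneg.mpr hΔ0.le
    have h2c : 2*((1/(2*Δ))*(Real.sqrt P * Real.sqrt Cq))
        = Δ⁻¹ * (Real.sqrt P * Real.sqrt Cq) := by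
      field_simp
    rw [mul_comm (Real.sqrt Cq) (Real.sqrt P)] at hc2
    rw [h2c] at hc1 hc2
    have hkey : (inner ℂ (pJ L a l ψ) (Matrix.toEuclideanLin (xxzMat Δ L) (pJ L a l ψ)) : ℂ).re
        ≤ E * ‖ψ‖^2 + 2*Δ⁻¹*(Real.sqrt P * Real.sqrt Cq) := by
      rw [hre, hQE]
      have a1 := (abs_le.mp hc1).2
      have a2 := (abs_le.mp hc2).2
      have a1' := neg_abs_le ((inner ℂ (pJ L a l ψ)
        (Matrix.toEuclideanLin (xxzMat Δ L) χv) : ℂ).re)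
      have a2' := neg_abs_le ((inner ℂ χv
        (Matrix.toEuclideanLin (xxzMat Δ L) (pJ L a l ψ)) : ℂ).re)
      linarith
    rw [div_le_iff₀ hPpos]
    have hCqP : Cq ≤ (ε/(1-ε)) * P := by
      have h1 : (ε/(1-ε)) * ((1-ε) * ‖ψ‖^2) = ε * ‖ψ‖^2 := by
        field_simp
      have h2 : (ε/(1-ε)) * ((1-ε) * ‖ψ‖^2) ≤ (ε/(1-ε)) * P :=
        mul_le_mul_of_nonneg_left hPge (div_nonneg hε0 h1ε.le)
      linarith [hNχ]
    have hsq1 : Real.sqrt Cq ≤ Real.sqrt (ε/(1-ε)) * Real.sqrt P := by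
      rw [← Real.sqrt_mul (div_nonneg hε0 h1ε.le)]
      exact Real.sqrt_le_sqrt hCqP
    have hPP : Real.sqrt P * Real.sqrt P = P := Real.mul_self_sqrt hP0
    have hb2 : 2*Δ⁻¹*(Real.sqrt P * Real.sqrt Cq)
        ≤ 2*Δ⁻¹*Real.sqrt (ε/(1-ε)) * P := by
      have h1 : Real.sqrt P * Real.sqrt Cq
          ≤ Real.sqrt P * (Real.sqrt (ε/(1-ε)) * Real.sqrt P) :=
        mul_le_mul_of_nonneg_left hsq1 (Real.sqrt_nonneg _)
      have h2 : Real.sqrt P * (Real.sqrt (ε/(1-ε)) * Real.sqrt P)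
          = Real.sqrt (ε/(1-ε)) * (Real.sqrt P * Real.sqrt P) := by ring
      rw [hPP] at h2
      nlinarith [hδinv]
    have hb1 : E * ‖ψ‖^2 ≤ E/(1-ε) * P := by
      rw [div_mul_eq_mul_div, le_div_iff₀ h1ε]
      nlinarith [hE0, hPge]
    calc (inner ℂ (pJ L a l ψ) (Matrix.toEuclideanLin (xxzMat Δ L) (pJ L a l ψ)) : ℂ).re
        ≤ E * ‖ψ‖^2 + 2*Δ⁻¹*(Real.sqrt P * Real.sqrt Cq) := hkey
      _ ≤ E/(1-ε) * P + 2*Δ⁻¹*Real.sqrt (ε/(1-ε)) * P := by linarith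
      _ = (E/(1-ε) + 2*Δ⁻¹*Real.sqrt (ε/(1-ε))) * P := by ring
end
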